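/- Let A ∈ ℝ^{m×n} have unit-norm rows and let x* satisfy A x* ≤ b. For any y ∈ ℝ^n, under the β-sampling scheme selecting the most violated constraint i* in the sample, one has (1/m)‖(Ay − b)^+‖² ≤ ‖y − x*‖² − E[‖P_{a_{i*}, b_{i*}}(y) − x*‖²], where P_{a_{i*}, b_{i*}}(y) = y − (a_{i*}^T y − b_{i*})^+ a_{i*} is the projection of y onto the halfspace {x : a_{i*}^T x ≤ b_{i*}}. -/

import Mathlib

noncomputable section
open Matrix Finset

lemma hockey (c : ℕ) : ∀ t : ℕ, ∑ k ∈ Finset.range t, (c + k).choose c = (c + t).choose (c+1) := by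
  intro t
  induction t with
  | zero => simp [Nat.choose_eq_zero_of_lt (Nat.lt_succ_self c)]
  | succ t ih =>
    rw [Finset.sum_range_succ, ih, show c + (t+1) = (c + t) + 1 from rfl,
      Nat.choose_succ_succ, Nat.add_comm]

lemma choose_ratio {β u m : ℕ} (hβ : 1 ≤ β) (hum : u ≤ m) :
    m * u.choose β ≤ u * m.choose β := by
  rcases Nat.eq_zero_or_pos u with hu | hu
  · subst hu
    simp [Nat.choose_eq_zero_of_lt hβ]
  obtain ⟨c, rfl⟩ : ∃ c, β = c + 1 := ⟨β - 1, by omega⟩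
  obtain ⟨v, rfl⟩ : ∃ v, u = v + 1 := ⟨u - 1, by omega⟩
  obtain ⟨w, rfl⟩ : ∃ w, m = w + 1 := ⟨m - 1, by omega⟩
  have h1 := Nat.add_one_mul_choose_eq v c
  have h2 := Nat.add_one_mul_choose_eq w c
  have h3 : Nat.choose v c ≤ Nat.choose w c := Nat.choose_le_choose c (by omega)
  apply Nat.le_of_mul_le_mul_right _ (Nat.succ_pos c)
  calc (w+1) * (v+1).choose (c+1) * (c+1)
      = (w+1) * ((v+1).choose (c+1) * (c+1)) := by ring
    _ = (w+1) * ((v+1) * v.choose c) := by rw [← h1]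
    _ ≤ (w+1) * ((v+1) * w.choose c) := Nat.mul_le_mul_left _ (Nat.mul_le_mul_left _ h3)
    _ = (v+1) * ((w+1) * w.choose c) := by ring
    _ = (v+1) * ((w+1).choose (c+1) * (c+1)) := by rw [h2]
    _ = (v+1) * (w+1).choose (c+1) * (c+1) := by ring

lemma abel_key (e s : ℕ → ℝ) (N : ℕ) (hs : ∀ k, s k ≤ s (k+1))
    (hT : ∀ t, 1 ≤ t → 0 ≤ ∑ k ∈ Finset.Ico t N, e k) :
    ∀ l a, a + l = N → (∑ k ∈ Finset.Ico a N, e k) * s a ≤ ∑ k ∈ Finset.Ico a N, e k * s k := by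
  intro l
  induction l with
  | zero => intro a ha; simp [show N ≤ a by omega, Finset.Ico_eq_empty_of_le]
  | succ l ih =>
    intro a ha
    have haN : a < N := by omega
    rw [Finset.sum_eq_sum_Ico_succ_bot haN, Finset.sum_eq_sum_Ico_succ_bot haN (fun k => e k * s k)]
    have h1 := ih (a+1) (by omega)
    have h2 : 0 ≤ ∑ k ∈ Finset.Ico (a+1) N, e k := hT (a+1) (by omega)
    have h3 : (∑ k ∈ Finset.Ico (a+1) N, e k) * s a ≤ (∑ k ∈ Finset.Ico (a+1) N, e k) * s (a+1) :=
      mul_le_mul_of_nonneg_left (hs a) h2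
    nlinarith [h1, h3]

/-- Positive residual `(aᵢᵀy − bᵢ)⁺` of row `i` of the system `Ax ≤ b` at `y`. -/
def res {m n : ℕ} (A : Matrix (Fin m) (Fin n) ℝ) (b : Fin m → ℝ) (y : Fin n → ℝ)
    (i : Fin m) : ℝ :=
  max (A.mulVec y i - b i) 0

lemma proj_bound {m n : ℕ} (A : Matrix (Fin m) (Fin n) ℝ) (b : Fin m → ℝ) (y xstar : Fin n → ℝ)
    (hrows : ∀ i, ∑ j, A i j ^ 2 = 1) (hxstar : ∀ i, A.mulVec xstar i ≤ b i) (i : Fin m) :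
    ∑ t, (y t - res A b y i * A i t - xstar t) ^ 2 ≤
      (∑ t, (y t - xstar t) ^ 2) - res A b y i ^ 2 := by
  set r := res A b y i with hrdef
  have hr0 : 0 ≤ r := le_max_right _ _
  have hrv : r * (A.mulVec y i - b i) = r ^ 2 := by
    rw [hrdef]
    unfold res
    rcases le_or_gt (A.mulVec y i - b i) 0 with h | h
    · rw [max_eq_right h]; ring
    · rw [max_eq_left h.le]; ring
  have hdot : ∑ t, A i t * (y t - xstar t) = A.mulVec y i - A.mulVec xstar i := by
    simp [Matrix.mulVec, dotProduct, mul_sub, Finset.sum_sub_distrib]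
  have hexp : ∑ t, (y t - r * A i t - xstar t) ^ 2 =
      (∑ t, (y t - xstar t) ^ 2) - 2 * r * (A.mulVec y i - A.mulVec xstar i)
        + r ^ 2 := by
    calc ∑ t, (y t - r * A i t - xstar t) ^ 2
        = ∑ t, ((y t - xstar t) ^ 2 - 2 * r * (A i t * (y t - xstar t)) + r ^ 2 * A i t ^ 2) :=
          Finset.sum_congr rfl fun t _ => by ring
      _ = (∑ t, (y t - xstar t) ^ 2) - 2 * r * (∑ t, A i t * (y t - xstar t))
            + r ^ 2 * ∑ t, A i t ^ 2 := by
          rw [Finset.sum_add_distrib, Finset.sum_sub_distrib, Finset.mul_sum, Finset.mul_sum]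
      _ = _ := by rw [hdot, hrows i]; ring
  have h2 : r * (A.mulVec y i - b i) ≤ r * (A.mulVec y i - A.mulVec xstar i) :=
    mul_le_mul_of_nonneg_left (by linarith [hxstar i]) hr0
  rw [hexp]
  nlinarith [h2, hrv]

/-- For `A` with unit-norm rows, a feasible point `x*` (`Ax* ≤ b`) and
any `y`, under the β-subset sampling scheme selecting the most violated constraint `i*`
(encoded by a sorting bijection `ord`, so the expectation of `q(i*)` is
`(1/C(m,β)) Σ_{k=0}^{m−β} C(β−1+k, β−1) q(i_k)` with `i_k` the index of the
`(β+k)`-th smallest entry of `(Ay − b)⁺`), one has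
`(1/m)‖(Ay − b)⁺‖² ≤ ‖y − x*‖² − E[‖P_{a_{i*}, b_{i*}}(y) − x*‖²]`, where
`P_{a,c}(y) = y − (aᵀy − c)⁺a` is the projection onto the halfspace `aᵀx ≤ c`. -/
theorem stmt2 {m n β : ℕ} (hβ : 1 ≤ β) (hβm : β ≤ m)
    (A : Matrix (Fin m) (Fin n) ℝ) (b : Fin m → ℝ) (y xstar : Fin n → ℝ)
    (hrows : ∀ i, ∑ j, A i j ^ 2 = 1)
    (hxstar : ∀ i, A.mulVec xstar i ≤ b i)
    (ord : Fin m ≃ Fin m)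
    (hord : ∀ j j' : Fin m, j ≤ j' → res A b y (ord j) ≤ res A b y (ord j')) :
    (1 / (m : ℝ)) * ∑ i, res A b y i ^ 2 ≤
      (∑ t, (y t - xstar t) ^ 2) -
        (1 / (m.choose β : ℝ)) *
          ∑ k : Fin (m - β + 1), ((β - 1 + k.val).choose (β - 1) : ℝ) *
            (∑ t, (y t - res A b y (ord ⟨β - 1 + k.val, by have := k.isLt; omega⟩) *
                A (ord ⟨β - 1 + k.val, by have := k.isLt; omega⟩) t - xstar t) ^ 2) := by
  
  have hm : 1 ≤ m := hβ.trans hβm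
  set N := m - β + 1 with hN
  have hidx : ∀ u : ℕ, min u (m-1) < m := fun u => by omega
  set ρ : ℕ → ℝ := fun u => res A b y (ord ⟨min u (m-1), hidx u⟩) with hρ
  have hρ0 : ∀ u, 0 ≤ ρ u := fun u => le_max_right _ _
  have hρmono : ∀ u v : ℕ, u ≤ v → ρ u ≤ ρ v := fun u v huv =>
    hord _ _ (Fin.mk_le_mk.mpr (by omega))
  have hρeq : ∀ j : Fin m, ρ j.val = res A b y (ord j) := by
    intro j
    have hj : (⟨min j.val (m-1), hidx j.val⟩ : Fin m) = j :=
      Fin.ext (by have := j.isLt; simp only []; omega)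
    simp only [hρ, hj]
  set σ : ℕ → ℝ := fun k => ρ (β - 1 + k) ^ 2 with hσ
  have hσmono : ∀ k, σ k ≤ σ (k+1) := fun k =>
    pow_le_pow_left₀ (hρ0 _) (hρmono _ _ (by omega)) 2
  set C := (m.choose β : ℝ) with hC
  have hCpos : 0 < C := by rw [hC]; exact_mod_cast Nat.choose_pos hβm
  set M := (m : ℝ) with hM
  have hMpos : 0 < M := by rw [hM]; exact_mod_cast hm
  set D := ∑ t, (y t - xstar t) ^ 2 with hD
  -- weight sums (hockey stick)
  have hcsumNat : ∀ t : ℕ, ∑ k ∈ Finset.range t, (β-1+k).choose (β-1) = (β-1+t).choose β := by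
    intro t
    rw [hockey (β-1) t]
    congr 1
    omega
  have hcsum : ∀ t : ℕ, ∑ k ∈ Finset.range t, ((β-1+k).choose (β-1) : ℝ)
      = ((β-1+t).choose β : ℝ) := fun t => by exact_mod_cast congrArg (Nat.cast : ℕ → ℝ) (hcsumNat t)
  have hCsumN : ∑ k ∈ Finset.range N, ((β-1+k).choose (β-1) : ℝ) = C := by
    rw [hcsum N, hC]
    congr 2
    omega
  set T := ∑ k ∈ Finset.range N, ((β-1+k).choose (β-1) : ℝ) * σ k with hTdef
  -- the e-weights
  set e : ℕ → ℝ := fun k => M * ((β-1+k).choose (β-1) : ℝ) - C * (if k = 0 then (β:ℝ) else 1)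
    with he
  have hTail : ∀ t, 1 ≤ t → 0 ≤ ∑ k ∈ Finset.Ico t N, e k := by
    intro t ht
    rcases le_or_gt N t with h | h
    · rw [Finset.Ico_eq_empty (by omega)]
      simp
    · have hsplit : ∑ k ∈ Finset.Ico t N, e k
          = M * (C - ((β-1+t).choose β : ℝ)) - C * ((N - t : ℕ) : ℝ) := by
        simp only [he]
        rw [Finset.sum_sub_distrib, ← Finset.mul_sum, ← Finset.mul_sum]
        congr 1
        · congr 1
          have hsum := Finset.sum_range_add_sum_Ico
            (fun k => ((β-1+k).choose (β-1) : ℝ)) h.le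
          rw [hcsum t] at hsum
          rw [hCsumN] at hsum
          linarith
        · congr 1
          rw [Finset.sum_congr rfl
            (fun k hk => if_neg (by have := (Finset.mem_Ico.mp hk).1; omega))]
          rw [Finset.sum_const, Nat.card_Ico, nsmul_eq_mul, mul_one]
      rw [hsplit]
      have hu : β - 1 + t ≤ m := by omega
      have hkey := choose_ratio hβ hu
      have hkeyR : M * ((β-1+t).choose β : ℝ) ≤ ((β-1+t : ℕ) : ℝ) * C := by
        rw [hM, hC]; exact_mod_cast hkey
      have hc1 : ((N - t : ℕ) : ℝ) = M - ((β-1+t : ℕ) : ℝ) := by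
        have h1 : (N - t) + (β-1+t) = m := by omega
        have h2 := congrArg (Nat.cast : ℕ → ℝ) h1
        rw [Nat.cast_add] at h2
        rw [hM]
        linarith
      rw [hc1]
      nlinarith [hkeyR, hCpos.le]
  have hEsum : ∑ k ∈ Finset.range N, e k * σ k
      = M * T - C * ((β:ℝ) * σ 0 + ∑ k ∈ Finset.Ico 1 N, σ k) := by
    simp only [he, sub_mul]
    rw [Finset.sum_sub_distrib]
    congr 1
    · rw [hTdef, Finset.mul_sum]
      exact Finset.sum_congr rfl fun k _ => by ring
    · rw [Finset.range_eq_Ico, Finset.sum_eq_sum_Ico_succ_bot (show 0 < N by omega)]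
      rw [if_pos rfl]
      have hcongr : (∑ k ∈ Finset.Ico 1 N, (C * if k = 0 then (β:ℝ) else 1) * σ k)
          = ∑ k ∈ Finset.Ico 1 N, C * σ k :=
        Finset.sum_congr rfl (fun k hk => by
          rw [if_neg (by have := (Finset.mem_Ico.mp hk).1; omega), mul_one])
      rw [hcongr, ← Finset.mul_sum]
      ring
  have hT0 : ∑ k ∈ Finset.range N, e k = 0 := by
    simp only [he]
    rw [Finset.sum_sub_distrib, ← Finset.mul_sum, ← Finset.mul_sum, hCsumN]
    have hds : ∑ k ∈ Finset.range N, (if k = 0 then (β:ℝ) else 1) = M := by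
      rw [Finset.range_eq_Ico, Finset.sum_eq_sum_Ico_succ_bot (show 0 < N by omega), if_pos rfl]
      rw [Finset.sum_congr rfl
        (fun k hk => if_neg (by have := (Finset.mem_Ico.mp hk).1; omega))]
      rw [Finset.sum_const, Nat.card_Ico, nsmul_eq_mul, mul_one]
      have h1 : (N - 1) + β = m := by omega
      have h2 := congrArg (Nat.cast : ℕ → ℝ) h1
      push_cast at h2
      rw [hM]
      linarith
    rw [hds]
    ring
  have habel := abel_key e σ N hσmono hTail N 0 (by omega)
  rw [← Finset.range_eq_Ico, hT0, zero_mul] at habel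
  -- bound for the full residual sum
  have hX : ∑ i, res A b y i ^ 2 = ∑ j ∈ Finset.range m, ρ j ^ 2 := by
    rw [← Equiv.sum_comp ord (fun i => res A b y i ^ 2)]
    rw [← Fin.sum_univ_eq_sum_range (fun j => ρ j ^ 2) m]
    exact Finset.sum_congr rfl fun j _ => by rw [hρeq j]
  have hXle : ∑ j ∈ Finset.range m, ρ j ^ 2 ≤ (β:ℝ) * σ 0 + ∑ k ∈ Finset.Ico 1 N, σ k := by
    rw [← Finset.sum_range_add_sum_Ico _ hβm]
    have part1 : ∑ j ∈ Finset.range β, ρ j ^ 2 ≤ (β:ℝ) * σ 0 := by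
      have hb : ∀ j ∈ Finset.range β, ρ j ^ 2 ≤ σ 0 := fun j hj => by
        have hj' := Finset.mem_range.mp hj
        simp only [hσ]
        exact pow_le_pow_left₀ (hρ0 _) (hρmono _ _ (by omega)) 2
      calc ∑ j ∈ Finset.range β, ρ j ^ 2 ≤ ∑ _j ∈ Finset.range β, σ 0 := Finset.sum_le_sum hb
        _ = (β:ℝ) * σ 0 := by rw [Finset.sum_const, Finset.card_range, nsmul_eq_mul]
    have part2 : ∑ j ∈ Finset.Ico β m, ρ j ^ 2 = ∑ k ∈ Finset.Ico 1 N, σ k := by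
      rw [Finset.sum_Ico_eq_sum_range, Finset.sum_Ico_eq_sum_range]
      rw [show N - 1 = m - β by omega]
      refine Finset.sum_congr rfl fun i _ => ?_
      simp only [hσ]
      rw [show β - 1 + (1 + i) = β + i by omega]
    linarith [part1, part2.le, part2.ge]
  -- the key expectation inequality
  have hfinal : (1/M) * ∑ i, res A b y i ^ 2 ≤ (1/C) * T := by
    rw [hX, div_mul_eq_mul_div, one_mul, div_mul_eq_mul_div, one_mul,
      div_le_div_iff₀ hMpos hCpos]
    have h0 : 0 ≤ ∑ k ∈ Finset.range N, e k * σ k := habel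
    have hB : (∑ j ∈ Finset.range m, ρ j ^ 2) * C
        ≤ ((β:ℝ) * σ 0 + ∑ k ∈ Finset.Ico 1 N, σ k) * C :=
      mul_le_mul_of_nonneg_right hXle hCpos.le
    nlinarith [hEsum, h0, hB]
  -- bound the goal's expectation sum
  have hgs : (∑ k : Fin N, ((β - 1 + k.val).choose (β - 1) : ℝ) *
      (∑ t, (y t - res A b y (ord ⟨β - 1 + k.val, by have := k.isLt; omega⟩) *
        A (ord ⟨β - 1 + k.val, by have := k.isLt; omega⟩) t - xstar t) ^ 2))
      ≤ C * D - T := by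
    have step1 : (∑ k : Fin N, ((β - 1 + k.val).choose (β - 1) : ℝ) *
        (∑ t, (y t - res A b y (ord ⟨β - 1 + k.val, by have := k.isLt; omega⟩) *
          A (ord ⟨β - 1 + k.val, by have := k.isLt; omega⟩) t - xstar t) ^ 2))
        ≤ ∑ k : Fin N, ((β - 1 + k.val).choose (β - 1) : ℝ) * (D - σ k.val) := by
      refine Finset.sum_le_sum fun k _ => ?_
      have hk : β - 1 + k.val < m := by have := k.isLt; omega
      refine mul_le_mul_of_nonneg_left ?_ (by positivity)
      have hres : σ k.val = res A b y (ord ⟨β - 1 + k.val, hk⟩) ^ 2 := by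
        have hjk : (⟨min (β - 1 + k.val) (m-1), hidx _⟩ : Fin m) = ⟨β - 1 + k.val, hk⟩ :=
          Fin.ext (by simp only []; omega)
        simp only [hσ, hρ, hjk]
      rw [hres]
      exact proj_bound A b y xstar hrows hxstar (ord ⟨β - 1 + k.val, hk⟩)
    have step2 : ∑ k : Fin N, ((β - 1 + k.val).choose (β - 1) : ℝ) * (D - σ k.val)
        = C * D - T := by
      rw [Fin.sum_univ_eq_sum_range (fun k => ((β - 1 + k).choose (β - 1) : ℝ) * (D - σ k)) N]
      simp only [mul_sub]
      rw [Finset.sum_sub_distrib, ← Finset.sum_mul, hCsumN, hTdef]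
    linarith [step1, step2.le, step2.ge]
  have h10 : D - (1/C) * (C*D - T) = (1/C) * T := by
    field_simp
    ring
  refine le_trans hfinal (le_trans (le_of_eq h10.symm)
    (sub_le_sub_left (mul_le_mul_of_nonneg_left hgs (by positivity)) D))
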